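/- Let W be an n-dimensional 𝔽_q-subgeometry of an n-dimensional 𝔽_{q^m}-vector space 𝕍(n,q^m) and let Γ be an (n−k)-dimensional 𝔽_{q^m}-subspace of 𝕍(n,q^m) with Γ ∩ W = {0}. Let U = (W+Γ)/Γ in 𝕍(k,q^m) = 𝕍(n,q^m)/Γ. Then for every 𝔽_{q^m}-subspace T of 𝕍(k,q^m) with w_U(T) = h and ⟨T ∩ U⟩_{𝔽_{q^m}} = T, the following hold: (1) T = (S_h* + Γ)/Γ for some h-dimensional 𝔽_q-subspace S_h of W (where S_h* = ⟨S_h⟩_{𝔽_{q^m}}); in particular 𝕍(k,q^m) = (W* + Γ)/Γ; (2) ε_U(T) = dim_{𝔽_{q^m}}(S_h* ∩ Γ); (3) if T' is an 𝔽_{q^m}-subspace of 𝕍(k,q^m) with T' ⊆ T, ⟨T' ∩ U⟩_{𝔽_{q^m}} = T' and T' = (S_{h'}* + Γ)/Γ for an 𝔽_q-subspace S_{h'} of W, then S_{h'} ⊆ S_h. -/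

import Mathlib

/-- The weight of the `𝔽_{q^m}`-subspace `T` with respect to the `𝔽_q`-subspace `U`:
`w_U(T) = dim_{𝔽_q}(U ∩ T)`. -/
noncomputable def wt {K L V : Type*} [Field K] [Field L] [Algebra K L]
    [AddCommGroup V] [Module K V] [Module L V] [IsScalarTower K L V]
    (U : Submodule K V) (T : Submodule L V) : ℕ :=
  Module.finrank K ↥(U ⊓ T.restrictScalars K)

/-- The defect of `T` with respect to `U`: `ε_U(T) = w_U(T) − dim_{𝔽_{q^m}}(T)`. -/
noncomputable def defect {K L V : Type*} [Field K] [Field L] [Algebra K L]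
    [AddCommGroup V] [Module K V] [Module L V] [IsScalarTower K L V]
    (U : Submodule K V) (T : Submodule L V) : ℤ :=
  (wt U T : ℤ) - Module.finrank L ↥T

/-- `ε_U(r)`: the maximum defect of `r`-dimensional `𝔽_{q^m}`-subspaces w.r.t. `U`. -/
noncomputable def maxDefect {K V : Type*} (L : Type*) [Field K] [Field L] [Algebra K L]
    [AddCommGroup V] [Module K V] [Module L V] [IsScalarTower K L V]
    (U : Submodule K V) (r : ℕ) : ℤ :=
  sSup {e : ℤ | ∃ T : Submodule L V, Module.finrank L ↥T = r ∧ e = defect U T}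


section Aux
variable {K L Vn : Type*} [Field K] [Field L] [Algebra K L]
    [AddCommGroup Vn] [Module K Vn] [Module L Vn] [IsScalarTower K L Vn]

lemma aux_inj (Γ : Submodule L Vn) (W : Submodule K Vn)
    (hΓW : Γ.restrictScalars K ⊓ W = ⊥) {S1 S2 : Submodule K Vn}
    (h1 : S1 ≤ W) (h2 : S2 ≤ W)
    (hle : S1.map (Γ.mkQ.restrictScalars K) ≤ S2.map (Γ.mkQ.restrictScalars K)) :
    S1 ≤ S2 := by
  intro x hx
  obtain ⟨y, hy, hyx⟩ := hle (Submodule.mem_map_of_mem hx)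
  have hsub : x - y ∈ Γ.restrictScalars K ⊓ W := by
    refine ⟨?_, W.sub_mem (h1 hx) (h2 hy)⟩
    show x - y ∈ Γ
    rw [← Submodule.ker_mkQ Γ, LinearMap.mem_ker, map_sub]
    have : Γ.mkQ y = Γ.mkQ x := hyx
    rw [this, sub_self]
  rw [hΓW, Submodule.mem_bot] at hsub
  have : x = y := by linear_combination (norm := abel) hsub
  rwa [this]

lemma aux_finrank_map (Γ : Submodule L Vn) (W : Submodule K Vn)
    (hΓW : Γ.restrictScalars K ⊓ W = ⊥) {S : Submodule K Vn} (hS : S ≤ W) :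
    Module.finrank K ↥(S.map (Γ.mkQ.restrictScalars K)) = Module.finrank K ↥S := by
  set f := (Γ.mkQ.restrictScalars K).comp S.subtype with hf
  have hinj : Function.Injective f := by
    rw [← LinearMap.ker_eq_bot]
    ext x
    simp only [LinearMap.mem_ker, Submodule.mem_bot, hf, LinearMap.comp_apply]
    constructor
    · intro hx
      have hxΓ : (x : Vn) ∈ Γ := by
        rw [← Submodule.ker_mkQ Γ, LinearMap.mem_ker]; exact hx
      have : (x : Vn) ∈ Γ.restrictScalars K ⊓ W := ⟨hxΓ, hS x.2⟩
      rw [hΓW, Submodule.mem_bot] at this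
      exact Subtype.ext this
    · rintro rfl; simp
  have hrange : LinearMap.range f = S.map (Γ.mkQ.restrictScalars K) := by
    rw [hf, LinearMap.range_comp, Submodule.range_subtype]
  rw [← hrange, LinearMap.finrank_range_of_inj hinj]

lemma aux_rank_nullity [FiniteDimensional L Vn] (Γ : Submodule L Vn) (P : Submodule L Vn) :
    Module.finrank L ↥(P.map Γ.mkQ) + Module.finrank L ↥(P ⊓ Γ) = Module.finrank L ↥P := by
  have h := LinearMap.finrank_range_add_finrank_ker (Γ.mkQ.comp P.subtype)
  have hr : LinearMap.range (Γ.mkQ.comp P.subtype) = P.map Γ.mkQ := by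
    rw [LinearMap.range_comp, Submodule.range_subtype]
  have hk : LinearMap.ker (Γ.mkQ.comp P.subtype) = Submodule.comap P.subtype Γ := by
    rw [LinearMap.ker_comp, Submodule.ker_mkQ]
  have heq : Module.finrank L ↥(Submodule.comap P.subtype Γ) = Module.finrank L ↥(P ⊓ Γ) := by
    have := (Submodule.equivMapOfInjective P.subtype (Submodule.injective_subtype P)
      (Submodule.comap P.subtype Γ)).finrank_eq
    rw [this, Submodule.map_comap_subtype, inf_comm]
  rw [hr, hk, heq] at h
  exact h

lemma aux_subgeom [FiniteDimensional L Vn] [Module.Finite K L]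
    (W : Submodule K Vn) (hWspan : Submodule.span L (W : Set Vn) = ⊤)
    (hWrank : Module.finrank K ↥W = Module.finrank L Vn)
    {S : Submodule K Vn} (hS : S ≤ W) :
    Module.finrank L ↥(Submodule.span L (S : Set Vn)) = Module.finrank K ↥S := by
  haveI : FiniteDimensional K Vn := Module.Finite.trans L Vn
  obtain ⟨bS, hbS_sub, hbS_span, hbS_ind⟩ := exists_linearIndependent K (S : Set Vn)
  have hbS_spanS : Submodule.span K bS = S := by rw [hbS_span, Submodule.span_eq]
  obtain ⟨b, hb_sub, hbS_b, hb_spanW, hb_ind⟩ := exists_linearIndepOn_id_extension hbS_ind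
    (hbS_sub.trans hS)
  have hb_span : Submodule.span K b = W := by
    apply le_antisymm
    · rw [Submodule.span_le]; exact hb_sub
    · intro x hx; exact hb_spanW hx
  have hbfin : b.Finite := hb_ind.setFinite
  haveI : Fintype b := hbfin.fintype
  haveI : Fintype bS := Set.Finite.fintype (hbfin.subset hbS_b)
  have hcardb : b.toFinset.card = Module.finrank L Vn := by
    rw [← hWrank, ← hb_span, finrank_span_set_eq_card hb_ind]
  have hspanLb : Submodule.span L b = ⊤ := by
    rw [← Submodule.span_span_of_tower K, hb_span, hWspan]
  have hbL_ind : LinearIndependent L ((↑) : b → Vn) := by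
    apply linearIndependent_of_top_le_span_of_card_eq_finrank
    · rw [Subtype.range_coe]; rw [hspanLb]
    · rw [Set.toFinset_card] at hcardb; exact hcardb
  have hbSL_ind : LinearIndependent L ((↑) : bS → Vn) := (show LinearIndepOn L id b from hbL_ind).mono hbS_b
  have h1 : Submodule.span L (S : Set Vn) = Submodule.span L bS := by
    rw [← hbS_spanS, Submodule.span_span_of_tower K]
  rw [h1, finrank_span_set_eq_card hbSL_ind, ← hbS_spanS,
    finrank_span_set_eq_card hbS_ind]

end Aux

/-- Proposition 1.24: weights and defects in the quotient (projection of a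
subgeometry) model. Here `U = (W + Γ)/Γ` inside `𝕍(k,q^m) = 𝕍(n,q^m)/Γ`. -/
theorem statement6 {K L Vn : Type*} [Field K] [Field L] [Algebra K L]
    [Fintype K] [Fintype L]
    [AddCommGroup Vn] [Module K Vn] [Module L Vn] [IsScalarTower K L Vn]
    [FiniteDimensional L Vn]
    (m n k : ℕ) (hm : 0 < m) (hk : 0 < k) (hkn : k < n)
    (hmL : Module.finrank K L = m) (hVn : Module.finrank L Vn = n)
    -- `W` is an `n`-dimensional `𝔽_q`-subgeometry of `𝕍(n,q^m)`
    (W : Submodule K Vn) (hW : Module.finrank K ↥W = n)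
    (hWstar : Module.finrank L ↥(Submodule.span L (W : Set Vn)) = n)
    -- `Γ` is an `(n−k)`-dimensional `𝔽_{q^m}`-subspace with `Γ ∩ W = 0`
    (Γ : Submodule L Vn) (hΓ : Module.finrank L ↥Γ = n - k)
    (hΓW : Γ.restrictScalars K ⊓ W = ⊥)
    -- `U = (W + Γ)/Γ`
    (U : Submodule K (Vn ⧸ Γ)) (hU : U = Submodule.map (Γ.mkQ.restrictScalars K) W)
    -- a subspace `T` of `𝕍(k,q^m)` with `w_U(T) = h` and `⟨T ∩ U⟩_{𝔽_{q^m}} = T`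
    (T : Submodule L (Vn ⧸ Γ)) (h : ℕ) (hwT : wt U T = h)
    (hTspan : Submodule.span L
      ((U ⊓ T.restrictScalars K : Submodule K (Vn ⧸ Γ)) : Set (Vn ⧸ Γ)) = T) :
    -- (1) `T = (S_h* + Γ)/Γ` with `S_h ≤ W` of dimension `h`; and `𝕍(k,q^m) = (W* + Γ)/Γ`
    ((∃ S : Submodule K Vn, S ≤ W ∧ Module.finrank K ↥S = h ∧
        T = Submodule.map Γ.mkQ (Submodule.span L (S : Set Vn))) ∧
      Submodule.map Γ.mkQ (Submodule.span L (W : Set Vn)) = ⊤) ∧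
    -- (2) `ε_U(T) = dim_{𝔽_{q^m}}(S_h* ∩ Γ)`
    (∀ S : Submodule K Vn, S ≤ W → Module.finrank K ↥S = h →
      T = Submodule.map Γ.mkQ (Submodule.span L (S : Set Vn)) →
      defect U T = Module.finrank L ↥(Submodule.span L (S : Set Vn) ⊓ Γ)) ∧
    -- (3) if `T' ⊆ T` is likewise represented by `S' ≤ W`, then `S' ⊆ S_h`
    (∀ T' : Submodule L (Vn ⧸ Γ), T' ≤ T →
      Submodule.span L
        ((U ⊓ T'.restrictScalars K : Submodule K (Vn ⧸ Γ)) : Set (Vn ⧸ Γ)) = T' →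
      ∀ S' : Submodule K Vn, S' ≤ W → Module.finrank K ↥S' = wt U T' →
        T' = Submodule.map Γ.mkQ (Submodule.span L (S' : Set Vn)) →
      ∀ S : Submodule K Vn, S ≤ W → Module.finrank K ↥S = h →
        T = Submodule.map Γ.mkQ (Submodule.span L (S : Set Vn)) →
        S' ≤ S) := by
  haveI : Module.Finite K L := Module.Finite.of_finite
  haveI : FiniteDimensional K Vn := Module.Finite.trans L Vn
  haveI : FiniteDimensional K (Vn ⧸ Γ) := Module.Finite.trans L (Vn ⧸ Γ)
  set πK := Γ.mkQ.restrictScalars K with hπK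
  -- span L W = ⊤
  have hspanW : Submodule.span L (W : Set Vn) = ⊤ :=
    Submodule.eq_top_of_finrank_eq (by rw [hWstar, hVn])
  have htop : Submodule.map Γ.mkQ (Submodule.span L (W : Set Vn)) = ⊤ := by
    rw [hspanW, Submodule.map_top, Submodule.range_mkQ]
  -- key lemma A
  have keyA : ∀ (T₀ : Submodule L (Vn ⧸ Γ)) (S : Submodule K Vn), S ≤ W →
      Module.finrank K ↥S = wt U T₀ →
      T₀ = Submodule.map Γ.mkQ (Submodule.span L (S : Set Vn)) →
      S.map πK = U ⊓ T₀.restrictScalars K := by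
    intro T₀ S hSW hSd hST
    have hle1 : S.map πK ≤ U := by rw [hU]; exact Submodule.map_mono hSW
    have hle2 : S.map πK ≤ T₀.restrictScalars K := by
      rintro _ ⟨x, hx, rfl⟩
      show πK x ∈ T₀
      rw [hST]
      exact Submodule.mem_map_of_mem (Submodule.subset_span hx)
    have hfr : Module.finrank K ↥(S.map πK) = Module.finrank K ↥S :=
      aux_finrank_map Γ W hΓW hSW
    refine Submodule.eq_of_le_of_finrank_le (le_inf hle1 hle2) ?_
    rw [hfr, hSd]
    exact le_of_eq rfl
  refine ⟨⟨?_, htop⟩, ?_, ?_⟩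
  · -- existence
    set S₀ := W ⊓ Submodule.comap πK (T.restrictScalars K) with hS₀
    have hS₀W : S₀ ≤ W := inf_le_left
    have hmap : S₀.map πK = U ⊓ T.restrictScalars K := by
      apply le_antisymm
      · refine le_inf ?_ ?_
        · rw [hU]; exact Submodule.map_mono inf_le_left
        · exact le_trans (Submodule.map_mono inf_le_right)
            (Submodule.map_comap_le _ _)
      · rintro y ⟨hyU, hyT⟩
        rw [hU] at hyU
        obtain ⟨w, hw, rfl⟩ := hyU
        exact ⟨w, ⟨hw, hyT⟩, rfl⟩
    have hfr0 : Module.finrank K ↥S₀ = h := by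
      rw [← aux_finrank_map Γ W hΓW hS₀W, hmap, ← hwT]; rfl
    refine ⟨S₀, hS₀W, hfr0, ?_⟩
    rw [Submodule.map_span, show Γ.mkQ '' (S₀ : Set Vn) = ((S₀.map πK : Submodule K (Vn ⧸ Γ)) : Set (Vn ⧸ Γ)) from ?_, hmap, hTspan]
    rw [Submodule.map_coe]
    rfl
  · -- (2)
    intro S hSW hSd hST
    have hdim : Module.finrank L ↥(Submodule.span L (S : Set Vn)) = h := by
      rw [aux_subgeom W hspanW (by rw [hW, hVn]) hSW, hSd]
    have hrn := aux_rank_nullity Γ (Submodule.span L (S : Set Vn))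
    rw [← hST, hdim] at hrn
    rw [defect, hwT]
    omega
  · -- (3)
    intro T' hT'le _hT'span S' hS'W hS'd hS'T S hSW hSd hST
    have h1 := keyA T' S' hS'W hS'd hS'T
    have h2 := keyA T S hSW (hSd.trans hwT.symm) hST
    refine aux_inj Γ W hΓW hS'W hSW ?_
    rw [h1, h2]
    exact inf_le_inf le_rfl (fun x hx => hT'le hx)
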